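/- Let 0 < κ ≤ 1, c > 0 and 0 < γ < 1. There exists a constant C > 0 such that for every λ ≥ 0 and every v ∈ ℝ³: ∫_{ℝ³} e^{−c|v−u|² + λ|v−u|} |v−u|^{κ−2} |u₁|^{−γ} du ≤ C e^{C λ²}, where u₁ denotes the first coordinate of u. -/

import Mathlib

noncomputable section

open Real MeasureTheory

/-- Euclidean 3-space. -/
abbrev E3 : Type := EuclideanSpace ℝ (Fin 3)

lemma abs_rpow_integrableOn_Icc {β : ℝ} (hβ : -1 < β) :
    IntegrableOn (fun t : ℝ => |t| ^ β) (Set.Icc (-1 : ℝ) 1) := by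
  have h1 : IntervalIntegrable (fun t : ℝ => t ^ β) volume 0 1 :=
    intervalIntegral.intervalIntegrable_rpow' hβ
  have h2 : IntervalIntegrable (fun t : ℝ => |t| ^ β) volume 0 1 := by
    rw [intervalIntegrable_iff_integrableOn_Ioc_of_le zero_le_one] at h1 ⊢
    exact h1.congr_fun (fun t ht => by rw [abs_of_pos ht.1]) measurableSet_Ioc
  have h3 : IntervalIntegrable (fun t : ℝ => |t| ^ β) volume 0 (-1) := by
    have := (IntervalIntegrable.iff_comp_neg enorm_ne_top).mp h2
    simpa using this
  have h4 : IntervalIntegrable (fun t : ℝ => |t| ^ β) volume (-1) 1 :=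
    h3.symm.trans h2
  rwa [intervalIntegrable_iff_integrableOn_Icc_of_le (by norm_num)] at h4

lemma gauss_abs_rpow_integrable {a β : ℝ} (ha : 0 < a) (hβ1 : -1 < β) (hβ2 : β ≤ 0) (s : ℝ) :
    Integrable (fun t : ℝ => Real.exp (-a * (s - t) ^ 2) * |t| ^ β) := by
  have hmeas : AEStronglyMeasurable (fun t : ℝ => Real.exp (-a * (s - t) ^ 2) * |t| ^ β) volume :=
    (by fun_prop : Measurable fun t : ℝ =>
      Real.exp (-a * (s - t) ^ 2) * |t| ^ β).aestronglyMeasurable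
  have hF : Integrable (fun t : ℝ =>
      Set.indicator (Set.Icc (-1 : ℝ) 1) (fun t => |t| ^ β) t + Real.exp (-a * (s - t) ^ 2)) := by
    apply Integrable.add
    · exact (abs_rpow_integrableOn_Icc hβ1).integrable_indicator measurableSet_Icc
    · exact (integrable_exp_neg_mul_sq ha).comp_sub_left s
  apply Integrable.mono' hF hmeas
  filter_upwards with t
  rw [Real.norm_eq_abs, abs_of_nonneg (by positivity)]
  rcases le_or_gt (|t|) 1 with h | h
  · have h1 : Real.exp (-a * (s - t) ^ 2) ≤ 1 :=
      Real.exp_le_one_iff.mpr (by nlinarith [sq_nonneg (s - t)])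
    have h3 : Set.indicator (Set.Icc (-1 : ℝ) 1) (fun t => |t| ^ β) t = |t| ^ β := by
      rw [Set.indicator_of_mem]; rw [Set.mem_Icc]; constructor <;> cases abs_le.mp h <;> linarith
    rw [h3]
    nlinarith [Real.exp_pos (-a * (s - t) ^ 2), Real.rpow_nonneg (abs_nonneg t) β]
  · have h1 : |t| ^ β ≤ 1 := Real.rpow_le_one_of_one_le_of_nonpos h.le hβ2
    have h3 : 0 ≤ Set.indicator (Set.Icc (-1 : ℝ) 1) (fun t => |t| ^ β) t :=
      Set.indicator_nonneg (fun t _ => Real.rpow_nonneg (abs_nonneg t) β) t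
    nlinarith [Real.exp_pos (-a * (s - t) ^ 2), Real.rpow_nonneg (abs_nonneg t) β]

lemma gauss_sub_integrable {a β : ℝ} (ha : 0 < a) (hβ1 : -1 < β) (hβ2 : β ≤ 0) (s : ℝ) :
    Integrable (fun t : ℝ => Real.exp (-a * (s - t) ^ 2) * |s - t| ^ β) :=
  (gauss_abs_rpow_integrable ha hβ1 hβ2 0).comp_sub_left s |>.congr (by
    filter_upwards with t
    simp [zero_sub, abs_neg, neg_sq]
    left; left; ring)

lemma gauss_sub_integral {a β : ℝ} (s : ℝ) :
    (∫ t : ℝ, Real.exp (-a * (s - t) ^ 2) * |s - t| ^ β)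
      = ∫ t : ℝ, Real.exp (-a * t ^ 2) * |t| ^ β :=
  integral_sub_left_eq_self (fun u : ℝ => Real.exp (-a * u ^ 2) * |u| ^ β) volume s

lemma gauss_gamma_bound {a γ : ℝ} (ha : 0 < a) (hγ1 : 0 < γ) (hγ2 : γ < 1) (s : ℝ) :
    (∫ t : ℝ, Real.exp (-a * (s - t) ^ 2) * |t| ^ (-γ))
      ≤ (∫ t in Set.Icc (-1 : ℝ) 1, |t| ^ (-γ)) + ∫ t : ℝ, Real.exp (-a * t ^ 2) := by
  have hβ1 : (-1 : ℝ) < -γ := by linarith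
  have hβ2 : (-γ : ℝ) ≤ 0 := by linarith
  have hind : Integrable
      (Set.indicator (Set.Icc (-1 : ℝ) 1) (fun t : ℝ => |t| ^ (-γ))) :=
    (abs_rpow_integrableOn_Icc hβ1).integrable_indicator measurableSet_Icc
  have hgauss : Integrable (fun t : ℝ => Real.exp (-a * (s - t) ^ 2)) :=
    (integrable_exp_neg_mul_sq ha).comp_sub_left s
  have hFint : Integrable (fun t : ℝ =>
      Set.indicator (Set.Icc (-1 : ℝ) 1) (fun t => |t| ^ (-γ)) t
        + Real.exp (-a * (s - t) ^ 2)) := hind.add hgauss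
  have hmono : (∫ t : ℝ, Real.exp (-a * (s - t) ^ 2) * |t| ^ (-γ))
      ≤ ∫ t : ℝ, (Set.indicator (Set.Icc (-1 : ℝ) 1) (fun t => |t| ^ (-γ)) t
        + Real.exp (-a * (s - t) ^ 2)) := by
    apply integral_mono_of_nonneg
    · filter_upwards with t; positivity
    · exact hFint
    · filter_upwards with t
      rcases le_or_gt (|t|) 1 with h | h
      · have h1 : Real.exp (-a * (s - t) ^ 2) ≤ 1 :=
          Real.exp_le_one_iff.mpr (by nlinarith [sq_nonneg (s - t)])
        have h3 : Set.indicator (Set.Icc (-1 : ℝ) 1) (fun t => |t| ^ (-γ)) t = |t| ^ (-γ) := by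
          rw [Set.indicator_of_mem]
          rw [Set.mem_Icc]; constructor <;> cases abs_le.mp h <;> linarith
        rw [h3]
        nlinarith [Real.exp_pos (-a * (s - t) ^ 2),
          Real.rpow_nonneg (abs_nonneg t) (-γ)]
      · have h1 : |t| ^ (-γ) ≤ 1 := Real.rpow_le_one_of_one_le_of_nonpos h.le hβ2
        have h3 : 0 ≤ Set.indicator (Set.Icc (-1 : ℝ) 1) (fun t => |t| ^ (-γ)) t :=
          Set.indicator_nonneg (fun t _ => Real.rpow_nonneg (abs_nonneg t) _) t
        nlinarith [Real.exp_pos (-a * (s - t) ^ 2),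
          Real.rpow_nonneg (abs_nonneg t) (-γ)]
  calc (∫ t : ℝ, Real.exp (-a * (s - t) ^ 2) * |t| ^ (-γ)) ≤ _ := hmono
    _ = (∫ t in Set.Icc (-1 : ℝ) 1, |t| ^ (-γ)) + ∫ t : ℝ, Real.exp (-a * t ^ 2) := by
        rw [integral_add hind hgauss, integral_indicator measurableSet_Icc,
          integral_sub_left_eq_self (fun u : ℝ => Real.exp (-a * u ^ 2)) volume s]

set_option maxHeartbeats 1000000

/-- The computational core of the weighted kernel estimate (Kd) used in the
weighted `W^{1,p}` estimates: with `u₁ = u·n(x)` the normal component, the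
weighted kernel integral is bounded by `C e^{Cλ²}`. -/
theorem weighted_kernel_integral_bound
    (κ c γ : ℝ) (hκ₁ : 0 < κ) (hκ₂ : κ ≤ 1) (hc : 0 < c)
    (hγ₁ : 0 < γ) (hγ₂ : γ < 1) :
    ∃ C > 0, ∀ lam : ℝ, 0 ≤ lam → ∀ v : E3,
      (∫ u : E3,
          Real.exp (-c * ‖v - u‖ ^ 2 + lam * ‖v - u‖) * ‖v - u‖ ^ (κ - 2) *
            |u 0| ^ (-γ))
        ≤ C * Real.exp (C * lam ^ 2) := by
  have h2c : (0 : ℝ) < 2 * c := by linarith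
  set a : ℝ := c / 2 with ha_def
  have ha : 0 < a := by positivity
  set α : ℝ := (κ - 2) / 2 with hα_def
  have hβ1 : (-1 : ℝ) < α := by rw [hα_def]; linarith
  have hβ2 : α ≤ 0 := by rw [hα_def]; linarith
  set K : ℝ := (∫ t in Set.Icc (-1 : ℝ) 1, |t| ^ (-γ)) + ∫ t : ℝ, Real.exp (-a * t ^ 2)
    with hK_def
  set J : ℝ := ∫ t : ℝ, Real.exp (-a * t ^ 2) * |t| ^ α with hJ_def
  have hK0 : 0 ≤ K := by
    apply add_nonneg
    · exact setIntegral_nonneg measurableSet_Icc fun t _ => Real.rpow_nonneg (abs_nonneg t) _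
    · exact integral_nonneg fun t => (Real.exp_pos _).le
  have hJ0 : 0 ≤ J := integral_nonneg fun t => by positivity
  refine ⟨K * J * J + 1 / (2 * c) + 1, by positivity, ?_⟩
  intro lam hlam v
  set C : ℝ := K * J * J + 1 / (2 * c) + 1 with hC_def
  have hKC : K * J * J ≤ C := by
    rw [hC_def]
    have : 0 < 1 / (2 * c) := by positivity
    linarith
  have hlamC : lam ^ 2 / (2 * c) ≤ C * lam ^ 2 := by
    have hC1 : 1 / (2 * c) ≤ C := by
      rw [hC_def]
      have : 0 ≤ K * J * J := by positivity
      linarith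
    calc lam ^ 2 / (2 * c) = (1 / (2 * c)) * lam ^ 2 := by ring
      _ ≤ C * lam ^ 2 := mul_le_mul_of_nonneg_right hC1 (sq_nonneg lam)
  -- the coordinate functions
  set φ : Fin 3 → ℝ → ℝ :=
    ![fun t => Real.exp (-a * (v 0 - t) ^ 2) * |t| ^ (-γ),
      fun t => Real.exp (-a * (v 1 - t) ^ 2) * |v 1 - t| ^ α,
      fun t => Real.exp (-a * (v 2 - t) ^ 2) * |v 2 - t| ^ α] with hφ_def
  have hφint : ∀ i, Integrable (φ i) := by
    intro i
    fin_cases i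
    · simpa [hφ_def] using gauss_abs_rpow_integrable ha (by linarith) (by linarith) (v 0)
    · simpa [hφ_def] using gauss_sub_integrable ha hβ1 hβ2 (v 1)
    · simpa [hφ_def] using gauss_sub_integrable ha hβ1 hβ2 (v 2)
  have hg : Integrable
      (fun x : Fin 3 → ℝ => Real.exp (lam ^ 2 / (2 * c)) * ∏ i, φ i (x i)) :=
    (Integrable.fintype_prod hφint).const_mul _
  have hprod : ∀ x : Fin 3 → ℝ, (∏ i, φ i (x i)) =
      (Real.exp (-a * (v 0 - x 0) ^ 2) * |x 0| ^ (-γ)) *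
      (Real.exp (-a * (v 1 - x 1) ^ 2) * |v 1 - x 1| ^ α) *
      (Real.exp (-a * (v 2 - x 2) ^ 2) * |v 2 - x 2| ^ α) := by
    intro x
    simp [hφ_def, Fin.prod_univ_three]
  -- transfer to the pi space
  rw [← ((EuclideanSpace.volume_preserving_symm_measurableEquiv_toLp (Fin 3)).symm).integral_comp
    (MeasurableEquiv.measurableEmbedding _)]
  have hae1 : ∀ᵐ x : Fin 3 → ℝ, x 1 ≠ v 1 := by
    rw [volume_pi]
    exact Measure.ae_eval_ne (fun _ : Fin 3 => (volume : Measure ℝ)) (1 : Fin 3) (v 1)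
  have hae2 : ∀ᵐ x : Fin 3 → ℝ, x 2 ≠ v 2 := by
    rw [volume_pi]
    exact Measure.ae_eval_ne (fun _ : Fin 3 => (volume : Measure ℝ)) (2 : Fin 3) (v 2)
  have key : (∫ x : Fin 3 → ℝ,
        Real.exp (-c * ‖v - (MeasurableEquiv.toLp 2 (Fin 3 → ℝ)) x‖ ^ 2
            + lam * ‖v - (MeasurableEquiv.toLp 2 (Fin 3 → ℝ)) x‖) *
          ‖v - (MeasurableEquiv.toLp 2 (Fin 3 → ℝ)) x‖ ^ (κ - 2) *
          |((MeasurableEquiv.toLp 2 (Fin 3 → ℝ)) x) 0| ^ (-γ))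
      ≤ ∫ x : Fin 3 → ℝ, Real.exp (lam ^ 2 / (2 * c)) * ∏ i, φ i (x i) := by
    apply integral_mono_of_nonneg
    · filter_upwards with x; positivity
    · exact hg
    · filter_upwards [hae1, hae2] with x h1 h2
      have hx0 : ((MeasurableEquiv.toLp 2 (Fin 3 → ℝ)) x) 0 = x 0 := by
        simp [MeasurableEquiv.toLp_apply]
      set N : ℝ := ‖v - (MeasurableEquiv.toLp 2 (Fin 3 → ℝ)) x‖ with hN_def
      have hN0 : 0 ≤ N := norm_nonneg _
      have hN2 : N ^ 2 = (v 0 - x 0) ^ 2 + (v 1 - x 1) ^ 2 + (v 2 - x 2) ^ 2 := by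
        rw [hN_def, EuclideanSpace.norm_eq, Real.sq_sqrt (by positivity)]
        simp [Fin.sum_univ_three, MeasurableEquiv.toLp_apply, sq_abs]
      set p : ℝ := |v 1 - x 1| with hp_def
      set q : ℝ := |v 2 - x 2| with hq_def
      have hp : 0 < p := abs_pos.mpr (sub_ne_zero.mpr (Ne.symm h1))
      have hq : 0 < q := abs_pos.mpr (sub_ne_zero.mpr (Ne.symm h2))
      have hpq : 0 < p * q := mul_pos hp hq
      -- exponential bound
      have hexp : Real.exp (-c * N ^ 2 + lam * N)
          ≤ Real.exp (lam ^ 2 / (2 * c)) * Real.exp (-a * N ^ 2) := by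
        rw [← Real.exp_add]
        apply Real.exp_le_exp.2
        have hkey : lam * N - c / 2 * N ^ 2 ≤ lam ^ 2 / (2 * c) := by
          rw [sub_le_iff_le_add]
          rw [div_add' _ _ _ (ne_of_gt h2c)]
          rw [le_div_iff₀ h2c]
          nlinarith [sq_nonneg (lam - c * N)]
        rw [ha_def]
        linarith
      -- rpow bound
      have hrpow : N ^ (κ - 2) ≤ p ^ α * q ^ α := by
        have hsq : p * q ≤ N ^ 2 := by
          have e1 : p ^ 2 = (v 1 - x 1) ^ 2 := by rw [hp_def, sq_abs]
          have e2 : q ^ 2 = (v 2 - x 2) ^ 2 := by rw [hq_def, sq_abs]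
          nlinarith [sq_nonneg (p - q), sq_nonneg (v 0 - x 0), hN2, e1, e2]
        have hle : Real.sqrt (p * q) ≤ N := by
          rw [show N = Real.sqrt (N ^ 2) from (Real.sqrt_sq hN0).symm]
          exact Real.sqrt_le_sqrt hsq
        have h1' : N ^ (κ - 2) ≤ (Real.sqrt (p * q)) ^ (κ - 2) :=
          Real.rpow_le_rpow_of_nonpos (Real.sqrt_pos.2 hpq) hle (by linarith)
        have h2' : (Real.sqrt (p * q)) ^ (κ - 2) = p ^ α * q ^ α := by
          rw [Real.sqrt_eq_rpow, ← Real.rpow_mul hpq.le,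
            show 1 / 2 * (κ - 2) = α by rw [hα_def]; ring]
          exact Real.mul_rpow hp.le hq.le
        rw [← h2']; exact h1'
      have hexp2 : Real.exp (-a * N ^ 2) =
          Real.exp (-a * (v 0 - x 0) ^ 2) * Real.exp (-a * (v 1 - x 1) ^ 2) *
            Real.exp (-a * (v 2 - x 2) ^ 2) := by
        rw [hN2, ← Real.exp_add, ← Real.exp_add]
        ring_nf
      rw [hx0, hprod x]
      calc Real.exp (-c * N ^ 2 + lam * N) * N ^ (κ - 2) * |x 0| ^ (-γ)
          ≤ (Real.exp (lam ^ 2 / (2 * c)) * Real.exp (-a * N ^ 2)) * (p ^ α * q ^ α)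
              * |x 0| ^ (-γ) := by
            apply mul_le_mul_of_nonneg_right _ (Real.rpow_nonneg (abs_nonneg _) _)
            exact mul_le_mul hexp hrpow (Real.rpow_nonneg hN0 _) (by positivity)
        _ = Real.exp (lam ^ 2 / (2 * c)) *
              ((Real.exp (-a * (v 0 - x 0) ^ 2) * |x 0| ^ (-γ)) *
                (Real.exp (-a * (v 1 - x 1) ^ 2) * p ^ α) *
                (Real.exp (-a * (v 2 - x 2) ^ 2) * q ^ α)) := by
            rw [hexp2]; ring
  refine key.trans ?_
  have hIg : (∫ x : Fin 3 → ℝ, Real.exp (lam ^ 2 / (2 * c)) * ∏ i, φ i (x i))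
      = Real.exp (lam ^ 2 / (2 * c)) * ((∫ t, φ 0 t) * (∫ t, φ 1 t) * (∫ t, φ 2 t)) := by
    rw [integral_const_mul, integral_fintype_prod_volume_eq_prod φ, Fin.prod_univ_three]
  rw [hIg]
  have h0K : (∫ t, φ 0 t) ≤ K := by
    have := gauss_gamma_bound ha hγ₁ hγ₂ (v 0)
    rw [hK_def]
    simpa [hφ_def] using this
  have h1J : (∫ t, φ 1 t) = J := by
    rw [hJ_def]
    have := gauss_sub_integral (a := a) (β := α) (v 1)
    simpa [hφ_def] using this
  have h2J : (∫ t, φ 2 t) = J := by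
    rw [hJ_def]
    have := gauss_sub_integral (a := a) (β := α) (v 2)
    simpa [hφ_def] using this
  rw [h1J, h2J]
  have hfinal : Real.exp (lam ^ 2 / (2 * c)) * ((∫ t, φ 0 t) * J * J)
      ≤ C * Real.exp (C * lam ^ 2) := by
    have hb : (∫ t, φ 0 t) * J * J ≤ K * J * J := by
      apply mul_le_mul_of_nonneg_right _ hJ0
      exact mul_le_mul_of_nonneg_right h0K hJ0
    calc Real.exp (lam ^ 2 / (2 * c)) * ((∫ t, φ 0 t) * J * J)
        ≤ Real.exp (C * lam ^ 2) * (K * J * J) := by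
          have h00 : 0 ≤ ∫ t, φ 0 t := by
            apply integral_nonneg
            intro t
            simp only [hφ_def, Matrix.cons_val_zero]
            positivity
          have h3 : 0 ≤ (∫ t, φ 0 t) * J * J := mul_nonneg (mul_nonneg h00 hJ0) hJ0
          exact mul_le_mul (Real.exp_le_exp.2 hlamC) hb h3 (Real.exp_nonneg _)
      _ ≤ Real.exp (C * lam ^ 2) * C := by
          exact mul_le_mul_of_nonneg_left hKC (Real.exp_nonneg _)
      _ = C * Real.exp (C * lam ^ 2) := mul_comm _ _
  exact hfinal
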